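/- Let (X, μ) be a probability space and P a self-adjoint operator on L²(X, μ) with P1 = 1 and such that (Pf, f) ≥ −ρ₋ ‖f‖² for all f orthogonal to the constants, where 0 ≤ ρ₋. If B ⊆ X is measurable with μ(B) = b and (P 1_B, 1_B) = 0, then b ≤ ρ₋/(1 + ρ₋). -/

import Mathlib

open MeasureTheory
open scoped RealInnerProductSpace

lemma inner_ind_ind {X : Type*} [MeasurableSpace X] (μ : Measure X) [IsFiniteMeasure μ]
    {s t : Set X} (hs : MeasurableSet s) (ht : MeasurableSet t) :
    ⟪indicatorConstLp 2 hs (measure_ne_top μ s) (1 : ℝ),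
      indicatorConstLp 2 ht (measure_ne_top μ t) (1 : ℝ)⟫ = (μ (s ∩ t)).toReal := by
  rw [L2.inner_indicatorConstLp_one hs (measure_ne_top μ s)]
  have h : ∫ x in s, (indicatorConstLp 2 ht (measure_ne_top μ t) (1 : ℝ) : X → ℝ) x ∂μ
      = ∫ x in s, t.indicator (fun _ => (1 : ℝ)) x ∂μ := by
    refine integral_congr_ae ?_
    exact (ae_restrict_of_ae (indicatorConstLp_coeFn))
  rw [h, setIntegral_indicator ht]
  simp [Set.inter_comm, measureReal_def]

/-- Hoffman-type bound for factors: if `P` is a self-adjoint Markov operator on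
`L²(X,μ)` with `P 1 = 1` and `⟨Pf, f⟩ ≥ −ρ₋ ‖f‖²` for `f ⊥ 1` (`ρ₋ ≥ 0`), and
`B` is measurable with `μ B = b` and `⟨P 1_B, 1_B⟩ = 0`, then
`b ≤ ρ₋/(1 + ρ₋)`. -/
theorem hoffman_bound
    {X : Type*} [MeasurableSpace X] (μ : Measure X) [IsProbabilityMeasure μ]
    (P : Lp ℝ 2 μ →L[ℝ] Lp ℝ 2 μ) (rm : ℝ) (hrm : 0 ≤ rm)
    (one : Lp ℝ 2 μ)
    (hone : one = indicatorConstLp 2 MeasurableSet.univ (measure_ne_top μ _) (1 : ℝ))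
    (hP1 : P one = one)
    (hSA : ∀ f g : Lp ℝ 2 μ, ⟪P f, g⟫ = ⟪f, P g⟫)
    (hbot : ∀ f : Lp ℝ 2 μ, ⟪f, one⟫ = 0 → ⟪P f, f⟫ ≥ -rm * ‖f‖ ^ 2)
    (B : Set X) (hB : MeasurableSet B) (b : ℝ) (hb : (μ B).toReal = b)
    (hindep : ⟪P (indicatorConstLp 2 hB (measure_ne_top μ B) (1 : ℝ)),
        indicatorConstLp 2 hB (measure_ne_top μ B) (1 : ℝ)⟫ = 0) :
    b ≤ rm / (1 + rm) := by
  set χ := indicatorConstLp 2 hB (measure_ne_top μ B) (1 : ℝ) with hχ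
  have hb0 : 0 ≤ b := hb ▸ ENNReal.toReal_nonneg
  have hχχ : ⟪χ, χ⟫ = b := by
    rw [hχ, inner_ind_ind μ hB hB, Set.inter_self, hb]
  have hχ1 : ⟪χ, one⟫ = b := by
    rw [hχ, hone, inner_ind_ind μ hB MeasurableSet.univ, Set.inter_univ, hb]
  have h1χ : ⟪one, χ⟫ = b := by rw [real_inner_comm]; exact hχ1
  have h11 : ⟪one, one⟫ = 1 := by
    rw [hone, inner_ind_ind μ MeasurableSet.univ MeasurableSet.univ, Set.inter_self]
    simp
  set f : Lp ℝ 2 μ := χ - b • one with hf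
  have hforth : ⟪f, one⟫ = 0 := by
    rw [hf, inner_sub_left, real_inner_smul_left, hχ1, h11]; ring
  have hPf : P f = P χ - b • one := by
    rw [hf, map_sub, _root_.map_smul, hP1]
  have hPχ1 : ⟪P χ, one⟫ = b := by rw [hSA, hP1, hχ1]
  have hPff : ⟪P f, f⟫ = -b ^ 2 := by
    rw [hPf, hf, inner_sub_left, inner_sub_right, inner_sub_right,
      real_inner_smul_left, real_inner_smul_left, real_inner_smul_right,
      real_inner_smul_right, hindep, hPχ1, h1χ, h11]
    ring
  have hnf : ‖f‖ ^ 2 = b - b ^ 2 := by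
    rw [← real_inner_self_eq_norm_sq, hf, inner_sub_left, inner_sub_right, inner_sub_right,
      real_inner_smul_left, real_inner_smul_left, real_inner_smul_right,
      real_inner_smul_right, hχχ, hχ1, h1χ, h11]
    ring
  have key := hbot f hforth
  rw [hPff, hnf] at key
  -- key : -b^2 ≥ -rm * (b - b^2)
  have h1rm : 0 < 1 + rm := by linarith
  rw [le_div_iff₀ h1rm]
  rcases hb0.eq_or_lt with h | h
  · nlinarith
  · nlinarith [mul_pos h h]
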